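/- arXiv:2202.03573 — 5 statements merged into one kernel-verified Lean document; each statement's English description precedes it below -/
import Mathlib

section
/- Let G=(V,E,w) be an undirected weighted graph on n nodes with positive edge weights, W its weighted adjacency matrix, D the diagonal degree matrix with D_{uu} = sum over neighbors v of u of w(u,v), and L = D − W its Laplacian. Then every entry of the matrix (L + I)^{-1} is non-negative, and consequently every entry of (L + I)^{-2} is non-negative. -/
open Matrix BigOperators
open scoped NNReal

attribute [local instance] Matrix.linftyOpNormedAddCommGroup Matrix.linftyOpNormedRing
  Matrix.linftyOpNormedSpace Matrix.linftyOpNormedAlgebra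

/-- Evaluation of a matrix entry as a continuous linear map (w.r.t. the linfty operator norm). -/
noncomputable def entryCLM {V : Type*} [Fintype V] (u v : V) :
    Matrix V V ℝ →L[ℝ] ℝ :=
  LinearMap.mkContinuous
    { toFun := fun M => M u v
      map_add' := fun M N => rfl
      map_smul' := fun c M => rfl } 1
    (fun M => by
      rw [one_mul]
      have h1 : ‖M u v‖₊ ≤ ∑ j, ‖M u j‖₊ :=
        Finset.single_le_sum (f := fun j => ‖M u j‖₊) (fun _ _ => zero_le)
          (Finset.mem_univ v)
      have h2 : (∑ j, ‖M u j‖₊) ≤ (Finset.univ : Finset V).sup fun i => ∑ j, ‖M i j‖₊ :=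
        Finset.le_sup (f := fun i => ∑ j, ‖M i j‖₊) (Finset.mem_univ u)
      calc ‖M u v‖ = ((‖M u v‖₊ : ℝ≥0) : ℝ) := rfl
        _ ≤ (((Finset.univ : Finset V).sup fun i => ∑ j, ‖M i j‖₊ : ℝ≥0) : ℝ) := by
            exact_mod_cast le_trans h1 h2
        _ = ‖M‖ := (Matrix.linfty_opNorm_def M).symm)

/-- Every entry of `(L + I)⁻¹` is non-negative, and consequently every entry of
`(L + I)⁻²` is non-negative, where `L = D - W` is the Laplacian of an undirected
weighted graph with non-negative symmetric weights. -/
theorem stmt_1 {V : Type*} [Fintype V] [DecidableEq V]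
    (W : Matrix V V ℝ) (hsymm : W.IsSymm) (hnn : ∀ u v, 0 ≤ W u v)
    (hloop : ∀ u, W u u = 0) :
    let D : Matrix V V ℝ := Matrix.diagonal fun u => ∑ v, W u v
    let L : Matrix V V ℝ := D - W
    (∀ u v, 0 ≤ (L + 1)⁻¹ u v) ∧
    (∀ u v, 0 ≤ ((L + 1)⁻¹ * (L + 1)⁻¹) u v) := by
  intro D L
  set d : V → ℝ := fun u => ∑ v, W u v with hd
  set c : ℝ := 1 + ∑ u, d u with hc
  have hdnn : ∀ u, 0 ≤ d u := fun u => Finset.sum_nonneg fun v _ => hnn u v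
  have hdc : ∀ u, d u + 1 ≤ c := by
    intro u
    have : d u ≤ ∑ u', d u' :=
      Finset.single_le_sum (f := d) (fun u' _ => hdnn u') (Finset.mem_univ u)
    rw [hc]; linarith
  have hc1 : (1 : ℝ) ≤ c := by
    have : 0 ≤ ∑ u, d u := Finset.sum_nonneg fun u _ => hdnn u
    rw [hc]; linarith
  have hc0 : (0 : ℝ) < c := lt_of_lt_of_le one_pos hc1
  have hcinv : (0 : ℝ) < c⁻¹ := inv_pos.mpr hc0
  set A : Matrix V V ℝ := L + 1 with hA
  set B : Matrix V V ℝ := 1 - c⁻¹ • A with hB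
  -- entry description of A
  have hAe : ∀ u v, A u v = (if u = v then d u + 1 else 0) - W u v := by
    intro u v
    simp only [hA, Matrix.add_apply, Matrix.sub_apply, Matrix.one_apply, L, D,
      Matrix.diagonal_apply]
    split_ifs with h
    · simp only [hd]; ring
    · ring_nf
  -- B has nonnegative entries
  have hBe : ∀ u v, B u v = (if u = v then 1 else 0) - c⁻¹ * A u v := by
    intro u v
    simp [hB, Matrix.sub_apply, Matrix.one_apply, Matrix.smul_apply]
  have hBnn : ∀ u v, 0 ≤ B u v := by
    intro u v
    rw [hBe, hAe]
    by_cases h : u = v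
    · subst h
      rw [if_pos rfl, if_pos rfl, hloop u, sub_zero]
      have h1 : c⁻¹ * (d u + 1) ≤ c⁻¹ * c := by
        apply mul_le_mul_of_nonneg_left (hdc u) (le_of_lt hcinv)
      rw [inv_mul_cancel₀ (ne_of_gt hc0)] at h1
      linarith
    · rw [if_neg h, if_neg h]
      have h2 : (0 : ℝ) - c⁻¹ * ((0 : ℝ) - W u v) = c⁻¹ * W u v := by ring
      rw [h2]
      exact mul_nonneg (le_of_lt hcinv) (hnn u v)
  -- row sums of B equal 1 - c⁻¹
  have hrow : ∀ u, ∑ v, B u v = 1 - c⁻¹ := by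
    intro u
    have hArow : ∑ v, A u v = 1 := by
      simp only [hAe]
      rw [Finset.sum_sub_distrib, Finset.sum_ite_eq (Finset.univ : Finset V),
        if_pos (Finset.mem_univ u)]
      show d u + 1 - ∑ v, W u v = 1
      simp only [hd]
      ring
    simp only [hBe]
    rw [Finset.sum_sub_distrib, ← Finset.mul_sum, hArow,
      Finset.sum_ite_eq (Finset.univ : Finset V)]
    simp
  -- norm bound
  have hBnorm : ‖B‖ < 1 := by
    rw [Matrix.linfty_opNorm_def]
    have : ((Finset.univ : Finset V).sup fun i => ∑ j, ‖B i j‖₊) < 1 := by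
      rw [Finset.sup_lt_iff (by norm_num : (⊥ : ℝ≥0) < 1)]
      intro u _
      have hcoe : ((∑ j, ‖B u j‖₊ : ℝ≥0) : ℝ) = ∑ j, B u j := by
        push_cast
        refine Finset.sum_congr rfl fun j _ => ?_
        exact Real.norm_of_nonneg (hBnn u j)
      rw [← NNReal.coe_lt_coe, hcoe, hrow u]
      simpa using hcinv
    exact_mod_cast this
  -- Neumann series
  have hsum : Summable (fun n : ℕ => B ^ n) := summable_geometric_of_norm_lt_one hBnorm
  set S : Matrix V V ℝ := ∑' n : ℕ, B ^ n with hS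
  have hmul : (1 - B) * S = 1 := mul_neg_geom_series B hBnorm
  have h1B : (1 : Matrix V V ℝ) - B = c⁻¹ • A := by rw [hB, sub_sub_cancel]
  have hAinv : A⁻¹ = c⁻¹ • S := by
    apply Matrix.inv_eq_right_inv
    rw [Matrix.mul_smul, ← Matrix.smul_mul, ← h1B, hmul]
  -- entries of powers are nonnegative
  have hpow : ∀ (n : ℕ) (u v : V), 0 ≤ (B ^ n) u v := by
    intro n
    induction n with
    | zero =>
      intro u v
      simp only [pow_zero, Matrix.one_apply]
      split_ifs <;> norm_num
    | succ n ih =>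
      intro u v
      rw [pow_succ, Matrix.mul_apply]
      exact Finset.sum_nonneg fun k _ => mul_nonneg (ih u k) (hBnn k v)
  -- entries of S are nonnegative
  have hSnn : ∀ u v, 0 ≤ S u v := by
    intro u v
    have hHS : HasSum (fun n : ℕ => (B ^ n) u v) (S u v) := by
      have := (entryCLM u v).hasSum hsum.hasSum
      exact this
    exact hasSum_le (fun n => hpow n u v) hasSum_zero hHS
  have key : ∀ u v, 0 ≤ (L + 1)⁻¹ u v := by
    intro u v
    have : (L + 1)⁻¹ = c⁻¹ • S := hAinv
    rw [this, Matrix.smul_apply, smul_eq_mul]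
    exact mul_nonneg (le_of_lt hcinv) (hSnn u v)
  refine ⟨key, fun u v => ?_⟩
  rw [Matrix.mul_apply]
  exact Finset.sum_nonneg fun k _ => mul_nonneg (key u k) (key k v)
end

section
/- Let U be a finite ground set, k a positive integer, and f a monotone submodular set function on subsets of U with f(∅) = 0. Let S_G be the set produced by the greedy algorithm that starts from the empty set and for k iterations adds an element maximizing the marginal gain of f. Then f(S_G) ≥ (1 − 1/e) · max_{S ⊆ U, |S| ≤ k} f(S). -/
open BigOperators

private lemma tele {U : Type*} [DecidableEq U]
    (f : Finset U → ℝ)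
    (hmono : ∀ S T : Finset U, S ⊆ T → f S ≤ f T)
    (hsub : ∀ S T : Finset U, S ⊆ T → ∀ x ∉ T,
      f (insert x T) - f T ≤ f (insert x S) - f S)
    (A : Finset U) (B : Finset U) :
    f (A ∪ B) ≤ f A + ∑ x ∈ B, (f (insert x A) - f A) := by
  classical
  induction B using Finset.induction_on with
  | empty => simp
  | @insert b B' hb ih =>
    rw [Finset.sum_insert hb]
    have hstep : f (A ∪ insert b B') ≤ f (A ∪ B') + (f (insert b A) - f A) := by
      rw [Finset.union_insert]
      by_cases hbA : b ∈ A ∪ B'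
      · rw [Finset.insert_eq_self.mpr hbA]
        have : f A ≤ f (insert b A) := hmono _ _ (Finset.subset_insert _ _)
        linarith
      · have := hsub A (A ∪ B') Finset.subset_union_left b hbA
        linarith
    linarith

/-- The greedy algorithm for maximizing a monotone submodular set function `f` with
`f(∅) = 0` subject to a cardinality constraint `k` achieves a `(1 − 1/e)`-approximation:
if `S 0 = ∅` and at each of the `k` steps an element with maximal marginal gain is
added, then `f (S k) ≥ (1 − 1/e) · f T` for every `T` with `|T| ≤ k`. -/
theorem stmt_15 {U : Type*} [Fintype U] [DecidableEq U] [Nonempty U]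
    (f : Finset U → ℝ) (k : ℕ) (hk : 0 < k)
    (hmono : ∀ S T : Finset U, S ⊆ T → f S ≤ f T)
    (hsub : ∀ S T : Finset U, S ⊆ T → ∀ x ∉ T,
      f (insert x T) - f T ≤ f (insert x S) - f S)
    (hempty : f ∅ = 0)
    (S : ℕ → Finset U) (hS0 : S 0 = ∅)
    (hgreedy : ∀ i < k, ∃ x : U, S (i + 1) = insert x (S i) ∧
      ∀ y : U, f (insert y (S i)) - f (S i) ≤ f (insert x (S i)) - f (S i)) :
    ∀ T : Finset U, T.card ≤ k → (1 - (Real.exp 1)⁻¹) * f T ≤ f (S k) := by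
  intro T hT
  have hkpos : (0 : ℝ) < k := by exact_mod_cast hk
  have hkne : (k : ℝ) ≠ 0 := ne_of_gt hkpos
  have hk1 : (1 : ℝ) ≤ k := by exact_mod_cast hk
  have hc0 : (0 : ℝ) ≤ 1 - 1 / k := by
    have : (1 : ℝ) / k ≤ 1 := by
      rw [div_le_one hkpos]; exact hk1
    linarith
  have hT0 : 0 ≤ f T := by
    have := hmono ∅ T (Finset.empty_subset T); linarith [hempty ▸ this]
  -- key step inequality
  have key : ∀ i < k, f T - f (S (i + 1)) ≤ (1 - 1 / k) * (f T - f (S i)) := by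
    intro i hi
    obtain ⟨x, hx, hmax⟩ := hgreedy i hi
    have hgain0 : 0 ≤ f (S (i + 1)) - f (S i) := by
      obtain ⟨y⟩ := (inferInstance : Nonempty U)
      have h1 : f (S i) ≤ f (insert y (S i)) := hmono _ _ (Finset.subset_insert _ _)
      have h2 := hmax y
      rw [hx]; linarith
    have h1 : f T ≤ f (S i ∪ T) := hmono _ _ Finset.subset_union_right
    have h2 := tele f hmono hsub (S i) T
    have h3 : ∑ x ∈ T, (f (insert x (S i)) - f (S i)) ≤
        ∑ _x ∈ T, (f (S (i + 1)) - f (S i)) := by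
      apply Finset.sum_le_sum
      intro y _
      have := hmax y
      rw [hx]; exact this
    rw [Finset.sum_const, nsmul_eq_mul] at h3
    have hcard : (T.card : ℝ) ≤ k := by exact_mod_cast hT
    have h4 : (T.card : ℝ) * (f (S (i + 1)) - f (S i)) ≤
        (k : ℝ) * (f (S (i + 1)) - f (S i)) :=
      mul_le_mul_of_nonneg_right hcard hgain0
    have h5 : f T - f (S i) ≤ (k : ℝ) * (f (S (i + 1)) - f (S i)) := by linarith
    have h6 : (f T - f (S i)) / k ≤ f (S (i + 1)) - f (S i) := by
      rw [div_le_iff₀ hkpos]; linarith [h5, mul_comm (f (S (i + 1)) - f (S i)) (k : ℝ)]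
    have h7 : (1 - 1 / (k : ℝ)) * (f T - f (S i)) =
        (f T - f (S i)) - (f T - f (S i)) / k := by ring
    linarith
  -- iterate
  have main : ∀ i, i ≤ k → f T - f (S i) ≤ (1 - 1 / (k : ℝ)) ^ i * f T := by
    intro i
    induction i with
    | zero => intro _; simp [hS0, hempty]
    | succ n ih =>
      intro hn
      have hn' : n < k := hn
      have h1 := key n hn'
      have h2 := ih (le_of_lt hn')
      have h3 : (1 - 1 / (k : ℝ)) * (f T - f (S n)) ≤
          (1 - 1 / (k : ℝ)) * ((1 - 1 / (k : ℝ)) ^ n * f T) :=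
        mul_le_mul_of_nonneg_left h2 hc0
      calc f T - f (S (n + 1)) ≤ (1 - 1 / (k : ℝ)) * (f T - f (S n)) := h1
        _ ≤ (1 - 1 / (k : ℝ)) * ((1 - 1 / (k : ℝ)) ^ n * f T) := h3
        _ = (1 - 1 / (k : ℝ)) ^ (n + 1) * f T := by ring
  have hmk := main k le_rfl
  -- (1 - 1/k)^k ≤ exp(-1) = (exp 1)⁻¹
  have e1 : (1 - 1 / (k : ℝ)) ≤ Real.exp (-(1 / k)) := by
    have := Real.add_one_le_exp (-(1 / (k : ℝ)))
    linarith
  have e2 : (1 - 1 / (k : ℝ)) ^ k ≤ Real.exp (-(1 / (k : ℝ))) ^ k :=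
    pow_le_pow_left₀ hc0 e1 k
  have e3 : Real.exp (-(1 / (k : ℝ))) ^ k = Real.exp (-1) := by
    rw [← Real.exp_nat_mul]
    congr 1
    field_simp
  have e4 : Real.exp (-1 : ℝ) = (Real.exp 1)⁻¹ := by
    rw [Real.exp_neg]
  have e5 : (1 - 1 / (k : ℝ)) ^ k * f T ≤ (Real.exp 1)⁻¹ * f T := by
    apply mul_le_mul_of_nonneg_right _ hT0
    rw [← e4, ← e3]; exact e2
  linarith
end

section
/- Let U be a finite ground set, k a positive integer, α ∈ (0,1], and let μ_L, μ_0, μ_U be non-negative set functions on subsets of U with μ_L(S) ≤ μ_0(S) ≤ μ_U(S) for all S. Let S* maximize μ_0 over sets of size at most k, and suppose μ_0(S*) > 0. Let S_L, S_U, S_0 be sets of size at most k such that μ_L(S_L) ≥ α · max_{|S|≤k} μ_L(S), μ_U(S_U) ≥ α · max_{|S|≤k} μ_U(S) with μ_U(S_U) > 0, and let S be whichever of S_0, S_L, S_U has the largest value of μ_0. Then μ_0(S) ≥ max{ μ_0(S_U) / μ_U(S_U), μ_L(S*) / μ_0(S*) } · α · μ_0(S*). -/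
open BigOperators

/-- The sandwich approximation guarantee (Lu et al.): if `μL ≤ μ0 ≤ μU` are non-negative
set functions, `S*` maximizes `μ0` over sets of size at most `k` with `μ0(S*) > 0`,
`S_L` and `S_U` are `α`-approximate maximizers of `μL` and `μU` respectively (with
`μU(S_U) > 0`), and `S` is whichever of `S_0, S_L, S_U` has the largest `μ0`-value,
then `μ0(S) ≥ max{μ0(S_U)/μU(S_U), μL(S*)/μ0(S*)} · α · μ0(S*)`. -/
theorem stmt_16 {U : Type*} [Fintype U] [DecidableEq U]
    (k : ℕ) (α : ℝ) (hα0 : 0 < α) (hα1 : α ≤ 1)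
    (μL μ0 μU : Finset U → ℝ)
    (hnnL : ∀ S, 0 ≤ μL S) (hnn0 : ∀ S, 0 ≤ μ0 S) (hnnU : ∀ S, 0 ≤ μU S)
    (hsand : ∀ S, μL S ≤ μ0 S ∧ μ0 S ≤ μU S)
    (Sstar : Finset U) (hstar_card : Sstar.card ≤ k)
    (hstar_max : ∀ T : Finset U, T.card ≤ k → μ0 T ≤ μ0 Sstar)
    (hstar_pos : 0 < μ0 Sstar)
    (S0 SL SU : Finset U)
    (hS0_card : S0.card ≤ k) (hSL_card : SL.card ≤ k) (hSU_card : SU.card ≤ k)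
    (hSL : ∀ T : Finset U, T.card ≤ k → α * μL T ≤ μL SL)
    (hSU : ∀ T : Finset U, T.card ≤ k → α * μU T ≤ μU SU)
    (hSU_pos : 0 < μU SU)
    (S : Finset U) (hS : S = S0 ∨ S = SL ∨ S = SU)
    (hSbest : μ0 S0 ≤ μ0 S ∧ μ0 SL ≤ μ0 S ∧ μ0 SU ≤ μ0 S) :
    max (μ0 SU / μU SU) (μL Sstar / μ0 Sstar) * α * μ0 Sstar ≤ μ0 S := by
  rcases max_cases (μ0 SU / μU SU) (μL Sstar / μ0 Sstar) with ⟨h, _⟩ | ⟨h, _⟩ <;> rw [h]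
  · -- (μ0 SU / μU SU) * α * μ0 Sstar ≤ μ0 S
    have h1 : α * μ0 Sstar ≤ μU SU := by
      have := hSU Sstar hstar_card
      have h2 := (hsand Sstar).2
      nlinarith
    have h3 : μ0 SU / μU SU * α * μ0 Sstar ≤ μ0 SU := by
      rw [div_mul_eq_mul_div, div_mul_eq_mul_div, div_le_iff₀ hSU_pos]
      have := hnn0 SU
      nlinarith
    linarith [hSbest.2.2]
  · -- (μL Sstar / μ0 Sstar) * α * μ0 Sstar ≤ μ0 S
    have h1 : μL Sstar / μ0 Sstar * α * μ0 Sstar = α * μL Sstar := by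
      field_simp
    rw [h1]
    have h2 := hSL Sstar hstar_card
    have h3 := (hsand SL).1
    linarith [hSbest.2.1]
end

section
/- Let n and k be positive integers with k ≤ n, let ε > 0, ℓ > 0, χ > 0, and OPT > 0. Let x_1, …, x_θ be independent identically distributed real random variables with common mean x satisfying 0 ≤ n·x ≤ OPT, |x_j| ≤ χ almost surely, and Var[x_j] ≤ χ x. Set λ = (8 n χ / ε^2)(ε/3 + 1)(ℓ ln n + ln 2 + ln C(n,k)), where C(n,k) is the binomial coefficient. If θ ≥ λ / OPT, then Pr[ | (n/θ) ∑_{j=1}^θ x_j − n x | ≥ (ε/2) · OPT ] ≤ 1 / (n^ℓ · C(n,k)). -/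
open MeasureTheory ProbabilityTheory BigOperators

private lemma aux_nonneg_of_deriv (f f' : ℝ → ℝ) (hf : ∀ z, HasDerivAt f (f' z) z)
    (h0 : f 0 = 0) (hd : ∀ z, 0 ≤ z → 0 ≤ f' z) : ∀ z, 0 ≤ z → 0 ≤ f z := by
  intro z hz
  have hmono : MonotoneOn f (Set.Ici (0:ℝ)) := by
    apply monotoneOn_of_deriv_nonneg (convex_Ici 0)
    · exact fun y _ => (hf y).continuousAt.continuousWithinAt
    · exact fun y _ => ((hf y).differentiableAt).differentiableWithinAt
    · intro y hy
      rw [(hf y).deriv]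
      exact hd y (le_of_lt (by simpa using hy))
  have := hmono Set.self_mem_Ici hz hz
  rwa [h0] at this

private lemma aux_exp_quad_neg {z : ℝ} (hz : z ≤ 0) : Real.exp z ≤ 1 + z + z^2/2 := by
  have key : ∀ y, 0 ≤ y → 0 ≤ (fun w => 1 - w + w^2/2 - Real.exp (-w)) y := by
    apply aux_nonneg_of_deriv _ (fun w => -1 + w + Real.exp (-w))
    · intro w
      have h1 : HasDerivAt (fun w : ℝ => Real.exp (-w)) (-Real.exp (-w)) w := by
        simpa [Function.comp_def] using (Real.hasDerivAt_exp (-w)).comp w ((hasDerivAt_id w).neg)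
      have h2 : HasDerivAt (fun w : ℝ => 1 - w + w^2/2) (-1 + w) w := by
        have := (((hasDerivAt_id w).const_sub 1).add (((hasDerivAt_id w).pow 2).div_const 2))
        refine this.congr_deriv ?_
        simp only [id_eq, pow_one]
        ring
      exact (h2.sub h1).congr_deriv (by ring)
    · norm_num
    · intro w hw
      have := Real.add_one_le_exp (-w)
      nlinarith [Real.exp_pos (-w)]
  have h := key (-z) (by linarith)
  simp only [neg_neg] at h
  nlinarith [h]

private lemma aux_exp_quad_pos {z : ℝ} (hz : 0 ≤ z) :
    (3 - z) * (Real.exp z - 1 - z) ≤ 3/2 * z^2 := by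
  have hg2 : ∀ w, 0 ≤ w → 0 ≤ 1 + (w - 1) * Real.exp w := by
    apply aux_nonneg_of_deriv _ (fun w => w * Real.exp w)
    · intro w
      have h := (((hasDerivAt_id w).sub_const 1).mul (Real.hasDerivAt_exp w)).const_add 1
      refine h.congr_deriv ?_
      simp only [id_eq]
      ring
    · norm_num
    · intro w hw; positivity
  have hg1 : ∀ w, 0 ≤ w → 0 ≤ w + 2 + (w - 2) * Real.exp w := by
    apply aux_nonneg_of_deriv _ (fun w => 1 + (w - 1) * Real.exp w)
    · intro w
      have h1 := ((hasDerivAt_id w).add_const 2).add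
        (((hasDerivAt_id w).sub_const 2).mul (Real.hasDerivAt_exp w))
      refine h1.congr_deriv ?_
      simp only [id_eq]
      ring
    · norm_num
    · exact hg2
  have hg : ∀ w, 0 ≤ w → 0 ≤ 3/2 * w^2 - (3 - w) * (Real.exp w - 1 - w) := by
    apply aux_nonneg_of_deriv _ (fun w => w + 2 + (w - 2) * Real.exp w)
    · intro w
      have h1 : HasDerivAt (fun w : ℝ => 3/2 * w^2) (3 * w) w := by
        have := ((hasDerivAt_id w).pow 2).const_mul (3/2 : ℝ)
        refine this.congr_deriv ?_
        simp only [id_eq, pow_one]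
        ring
      have h2 : HasDerivAt (fun w : ℝ => (3 - w) * (Real.exp w - 1 - w))
          ((-1) * (Real.exp w - 1 - w) + (3 - w) * (Real.exp w - 1)) w := by
        have := (((hasDerivAt_id w).const_sub 3).mul
          (((Real.hasDerivAt_exp w).sub_const 1).sub (hasDerivAt_id w)))
        refine this.congr_deriv ?_
        try simp only [id_eq, Pi.sub_apply]
        try ring
      have := h1.sub h2
      refine this.congr_deriv ?_
      ring
    · norm_num
    · exact hg1
  nlinarith [hg z hz]

private lemma aux_exp_quad {u z : ℝ} (hu0 : 0 ≤ u) (hu3 : u < 3) (hz : z ≤ u) :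
    Real.exp z ≤ 1 + z + z^2 * (3 / (2 * (3 - u))) := by
  have h3u : 0 < 3 - u := by linarith
  rcases le_or_gt z 0 with hz0 | hz0
  · have h := aux_exp_quad_neg hz0
    have hK : (1:ℝ)/2 ≤ 3 / (2 * (3 - u)) := by
      rw [div_le_div_iff₀ (by norm_num) (by positivity)]
      nlinarith
    nlinarith [sq_nonneg z]
  · have h1 := aux_exp_quad_pos hz0.le
    have h3z : 0 < 3 - z := by linarith
    have he : 0 ≤ Real.exp z - 1 - z := by
      have := Real.add_one_le_exp z
      linarith
    have hcl : (Real.exp z - 1 - z) * (2 * (3 - u)) ≤ z^2 * 3 := by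
      nlinarith
    have h5 : Real.exp z - 1 - z ≤ z^2 * (3 / (2 * (3 - u))) := by
      rw [mul_div_assoc' (z^2) 3, le_div_iff₀ (by positivity)]
      linarith
    linarith

private lemma aux_integrable_of_bound {Ω : Type*} [MeasurableSpace Ω] {μ : Measure Ω}
    [IsProbabilityMeasure μ] {f : Ω → ℝ} (hm : Measurable f) (C : ℝ)
    (h : ∀ᵐ ω ∂μ, |f ω| ≤ C) : Integrable f μ :=
  ⟨hm.aestronglyMeasurable,
    HasFiniteIntegral.of_bounded (C := C) (by simpa [Real.norm_eq_abs] using h)⟩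

private lemma aux_tail {Ω : Type*} [MeasurableSpace Ω] (μ : Measure Ω)
    [IsProbabilityMeasure μ] {m : ℕ} (Z : Fin m → Ω → ℝ) (b V t A : ℝ)
    (hb : 0 < b) (hV : 0 < V) (ht : 0 ≤ t) (htb : t * b < 3)
    (hZmeas : ∀ j, Measurable (Z j))
    (hZindep : iIndepFun Z μ)
    (hZmean : ∀ j, ∫ ω, Z j ω ∂μ = 0)
    (hZbdd : ∀ j, ∀ᵐ ω ∂μ, |Z j ω| ≤ b)
    (hZvar : ∀ j, ∫ ω, (Z j ω)^2 ∂μ ≤ V) :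
    (μ {ω | A ≤ ∑ j, Z j ω}).toReal ≤
      Real.exp (-t * A + m * (t^2 * V * (3 / (2 * (3 - t * b))))) := by
  set K : ℝ := 3 / (2 * (3 - t * b)) with hKdef
  have h3tb : 0 < 3 - t * b := by linarith
  have hK0 : 0 ≤ K := by positivity
  have hexp_int : ∀ j, Integrable (fun ω => Real.exp (t * Z j ω)) μ := by
    intro j
    apply aux_integrable_of_bound ((hZmeas j).const_mul t).exp (Real.exp (t * b))
    filter_upwards [hZbdd j] with ω hω
    rw [abs_of_pos (Real.exp_pos _), Real.exp_le_exp]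
    calc t * Z j ω ≤ t * |Z j ω| := by
          exact mul_le_mul_of_nonneg_left (le_abs_self _) ht
      _ ≤ t * b := mul_le_mul_of_nonneg_left hω ht
  have hZint : ∀ j, Integrable (Z j) μ := fun j =>
    aux_integrable_of_bound (hZmeas j) b (hZbdd j)
  have hZ2int : ∀ j, Integrable (fun ω => (Z j ω)^2) μ := by
    intro j
    apply aux_integrable_of_bound ((hZmeas j).pow_const 2) (b^2)
    filter_upwards [hZbdd j] with ω hω
    rw [abs_pow]
    exact pow_le_pow_left₀ (abs_nonneg _) hω 2
  -- per-variable mgf bound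
  have hmgf : ∀ j, mgf (Z j) μ t ≤ Real.exp (t^2 * V * K) := by
    intro j
    have hpt : ∀ᵐ ω ∂μ, Real.exp (t * Z j ω) ≤ 1 + t * Z j ω + t^2 * K * (Z j ω)^2 := by
      filter_upwards [hZbdd j] with ω hω
      have hz : t * Z j ω ≤ t * b :=
        mul_le_mul_of_nonneg_left (le_trans (le_abs_self _) hω) ht
      have := aux_exp_quad (mul_nonneg ht hb.le) htb hz
      calc Real.exp (t * Z j ω) ≤ 1 + t * Z j ω + (t * Z j ω)^2 * K := this
        _ = 1 + t * Z j ω + t^2 * K * (Z j ω)^2 := by ring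
    have hRint : Integrable (fun ω => 1 + t * Z j ω + t^2 * K * (Z j ω)^2) μ :=
      ((integrable_const 1).add ((hZint j).const_mul t)).add ((hZ2int j).const_mul (t^2 * K))
    have h1 : mgf (Z j) μ t ≤ ∫ ω, (1 + t * Z j ω + t^2 * K * (Z j ω)^2) ∂μ :=
      integral_mono_ae (hexp_int j) hRint hpt
    have h2 : ∫ ω, (1 + t * Z j ω + t^2 * K * (Z j ω)^2) ∂μ
        = 1 + t * (∫ ω, Z j ω ∂μ) + t^2 * K * (∫ ω, (Z j ω)^2 ∂μ) := by
      have i1 : Integrable (fun ω => t * Z j ω) μ := (hZint j).const_mul t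
      have i2 : Integrable (fun ω => t ^ 2 * K * Z j ω ^ 2) μ :=
        (hZ2int j).const_mul (t ^ 2 * K)
      have e1 : (∫ ω, (1 + t * Z j ω + t ^ 2 * K * Z j ω ^ 2) ∂μ)
          = (∫ ω, (1 + t * Z j ω) ∂μ) + ∫ ω, t ^ 2 * K * Z j ω ^ 2 ∂μ :=
        integral_add ((integrable_const 1).add i1) i2
      have e2 : (∫ ω, (1 + t * Z j ω) ∂μ)
          = (∫ ω, (1 : ℝ) ∂μ) + ∫ ω, t * Z j ω ∂μ :=
        integral_add (integrable_const 1) i1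
      rw [e1, e2, integral_const, integral_const_mul, integral_const_mul]
      simp [measure_univ]
    rw [h2, hZmean j] at h1
    have h3 : 1 + t * 0 + t^2 * K * (∫ ω, (Z j ω)^2 ∂μ) ≤ 1 + t^2 * V * K := by
      have := mul_le_mul_of_nonneg_left (hZvar j) (by positivity : (0:ℝ) ≤ t^2 * K)
      nlinarith
    calc mgf (Z j) μ t ≤ 1 + t^2 * V * K := le_trans h1 h3
      _ ≤ Real.exp (t^2 * V * K) := by
        have := Real.add_one_le_exp (t^2 * V * K)
        linarith
  -- Chernoff
  have hsum_int : Integrable (fun ω => Real.exp (t * (∑ i, Z i) ω)) μ := by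
    have hmsum : Measurable (fun ω => ∑ i, Z i ω) :=
      Finset.measurable_sum Finset.univ (fun i _ => hZmeas i)
    have : Integrable (fun ω => Real.exp (t * ∑ i, Z i ω)) μ := by
      apply aux_integrable_of_bound (hmsum.const_mul t).exp (Real.exp (t * (m * b)))
      have hall := (ae_all_iff).2 hZbdd
      filter_upwards [hall] with ω hω
      rw [abs_of_pos (Real.exp_pos _), Real.exp_le_exp]
      have habs : |∑ i, Z i ω| ≤ m * b := by
        calc |∑ i, Z i ω| ≤ ∑ i, |Z i ω| := Finset.abs_sum_le_sum_abs _ _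
          _ ≤ ∑ _i : Fin m, b := Finset.sum_le_sum (fun i _ => hω i)
          _ = m * b := by simp [Finset.sum_const, nsmul_eq_mul]
      calc t * ∑ i, Z i ω ≤ t * |∑ i, Z i ω| :=
            mul_le_mul_of_nonneg_left (le_abs_self _) ht
        _ ≤ t * (m * b) := mul_le_mul_of_nonneg_left habs ht
    simpa [Finset.sum_apply] using this
  have hchern := measure_ge_le_exp_mul_mgf (μ := μ) (X := ∑ i, Z i) A ht hsum_int
  have hmgfsum : mgf (∑ i, Z i) μ t = ∏ i, mgf (Z i) μ t :=
    hZindep.mgf_sum hZmeas Finset.univ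
  have hprod : ∏ i : Fin m, mgf (Z i) μ t ≤ Real.exp (m * (t^2 * V * K)) := by
    calc ∏ i : Fin m, mgf (Z i) μ t ≤ ∏ _i : Fin m, Real.exp (t^2 * V * K) :=
          Finset.prod_le_prod (fun i _ => mgf_nonneg) (fun i _ => hmgf i)
      _ = Real.exp (t^2 * V * K) ^ m := by simp [Finset.prod_const]
      _ = Real.exp (m * (t^2 * V * K)) := by rw [← Real.exp_nat_mul]
  have hset : {ω | A ≤ (∑ i, Z i) ω} = {ω | A ≤ ∑ j, Z j ω} := by
    ext ω; simp [Finset.sum_apply]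
  rw [hset, hmgfsum] at hchern
  calc (μ {ω | A ≤ ∑ j, Z j ω}).toReal
      ≤ Real.exp (-t * A) * ∏ i, mgf (Z i) μ t := hchern
    _ ≤ Real.exp (-t * A) * Real.exp (m * (t^2 * V * K)) := by
        exact mul_le_mul_of_nonneg_left hprod (Real.exp_pos _).le
    _ = Real.exp (-t * A + m * (t^2 * V * K)) := by rw [← Real.exp_add]

private lemma aux_tb (a b V : ℝ) (ha : 0 < a) (hb : 0 < b) (hV : 0 < V) :
    a / (V + a * b / 3) * b < 3 := by
  have hD : 0 < V + a * b / 3 := by positivity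
  rw [div_mul_eq_mul_div, div_lt_iff₀ hD]
  nlinarith

private lemma aux_exponent (a b V θR : ℝ) (ha : 0 < a) (hb : 0 < b) (hV : 0 < V) :
    -(a / (V + a * b / 3)) * (θR * a) + θR * ((a / (V + a * b / 3)) ^ 2 * V *
      (3 / (2 * (3 - a / (V + a * b / 3) * b)))) = -(θR * (a ^ 2 / (2 * (V + a * b / 3)))) := by
  have hD : 0 < V + a * b / 3 := by positivity
  have h1 : 3 - a / (V + a * b / 3) * b = 3 * V / (V + a * b / 3) := by
    field_simp
    ring
  rw [h1]
  field_simp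
  ring

/-- Sample-size bound for RR-set estimation: with
`λ = (8nχ/ε²)(ε/3 + 1)(ℓ ln n + ln 2 + ln C(n,k))` and `θ ≥ λ/OPT` i.i.d. samples,
each bounded by `χ` with mean `x` (where `0 ≤ n·x ≤ OPT`) and variance at most `χ·x`,
the estimator `(n/θ)·∑ x_j` deviates from `n·x` by at least `(ε/2)·OPT` with
probability at most `1/(n^ℓ · C(n,k))`. -/
theorem stmt_18 {Ω : Type*} [MeasurableSpace Ω] (μ : Measure Ω)
    [IsProbabilityMeasure μ]
    (n k : ℕ) (hn : 0 < n) (hk0 : 0 < k) (hkn : k ≤ n)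
    (ε ℓ χ OPT : ℝ) (hε : 0 < ε) (hℓ : 0 < ℓ) (hχ : 0 < χ) (hOPT : 0 < OPT)
    (θ : ℕ) (X : Fin θ → Ω → ℝ) (x : ℝ)
    (hmeas : ∀ j, Measurable (X j))
    (hindep : iIndepFun X μ)
    (hident : ∀ i j, IdentDistrib (X i) (X j) μ μ)
    (hmean : ∀ j, ∫ ω, X j ω ∂μ = x)
    (hx0 : 0 ≤ (n : ℝ) * x) (hxOPT : (n : ℝ) * x ≤ OPT)
    (hbdd : ∀ j, ∀ᵐ ω ∂μ, |X j ω| ≤ χ)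
    (hvar : ∀ j, variance (X j) μ ≤ χ * x)
    (hθ : ((8 * n * χ / ε ^ 2) * (ε / 3 + 1) *
        (ℓ * Real.log n + Real.log 2 + Real.log (Nat.choose n k))) / OPT ≤ (θ : ℝ)) :
    (μ {ω | (ε / 2) * OPT ≤ |((n : ℝ) / θ) * (∑ j, X j ω) - n * x|}).toReal ≤
      1 / ((n : ℝ) ^ ℓ * Nat.choose n k) := by
  have hnR : (0:ℝ) < n := Nat.cast_pos.mpr hn
  have hn1 : (1:ℝ) ≤ n := Nat.one_le_cast.mpr hn
  have hC1 : (1:ℝ) ≤ (Nat.choose n k : ℝ) := Nat.one_le_cast.mpr (Nat.choose_pos hkn)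
  have hC0 : (0:ℝ) < (Nat.choose n k : ℝ) := lt_of_lt_of_le one_pos hC1
  set L : ℝ := ℓ * Real.log n + Real.log 2 + Real.log (Nat.choose n k) with hLdef
  have hL : 0 < L := by
    have h1 : 0 ≤ Real.log n := Real.log_nonneg hn1
    have h2 : 0 < Real.log 2 := Real.log_pos (by norm_num)
    have h3 : 0 ≤ Real.log (Nat.choose n k) := Real.log_nonneg hC1
    have : 0 ≤ ℓ * Real.log n := mul_nonneg hℓ.le h1
    rw [hLdef]; linarith
  have hθpos : (0:ℝ) < θ := by
    refine lt_of_lt_of_le ?_ hθ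
    positivity
  have hθne : (θ:ℝ) ≠ 0 := hθpos.ne'
  -- basic quantities
  set a : ℝ := ε * OPT / (2 * n) with ha_def
  set b : ℝ := 2 * χ with hb_def
  set V : ℝ := χ * OPT / n with hV_def
  set D : ℝ := V + a * b / 3 with hD_def
  have ha : 0 < a := by rw [ha_def]; positivity
  have hb : 0 < b := by rw [hb_def]; positivity
  have hV : 0 < V := by rw [hV_def]; positivity
  have hD : 0 < D := by rw [hD_def]; positivity
  set t : ℝ := a / D with ht_def
  have ht : 0 < t := by rw [ht_def]; positivity
  have htb : t * b < 3 := aux_tb a b V ha hb hV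
  set A : ℝ := θ * a with hA_def
  -- |x| ≤ χ
  have hxχ : |x| ≤ χ := by
    have j0 : Fin θ := ⟨0, by exact_mod_cast Nat.pos_of_ne_zero (by
      intro h; rw [h] at hθpos; simp at hθpos)⟩
    have h := norm_integral_le_of_norm_le_const (μ := μ) (f := X j0) (C := χ)
      (by simpa [Real.norm_eq_abs] using hbdd j0)
    rw [hmean j0, probReal_univ] at h
    simpa [Real.norm_eq_abs] using h
  have hXint : ∀ j, Integrable (X j) μ := fun j =>
    aux_integrable_of_bound (hmeas j) χ (hbdd j)
  -- variance via integral
  have hvar' : ∀ j, ∫ ω, (X j ω - x)^2 ∂μ ≤ V := by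
    intro j
    have hmem : MeasureTheory.MemLp (X j) 2 μ :=
      (memLp_top_of_bound (hmeas j).aestronglyMeasurable χ
        (by simpa [Real.norm_eq_abs] using hbdd j)).mono_exponent le_top
    have h := variance_eq_integral (hmeas j).aemeasurable (μ := μ)
    rw [hmean j] at h
    have h2 : ∫ ω, (X j ω - x)^2 ∂μ = variance (X j) μ := by
      rw [h]
    rw [h2]
    refine le_trans (hvar j) ?_
    rw [hV_def]
    rw [div_eq_mul_inv, mul_assoc]
    refine mul_le_mul_of_nonneg_left ?_ hχ.le
    rw [← div_eq_mul_inv, le_div_iff₀ hnR]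
    linarith [hxOPT]
  -- the two centered families
  set Zp : Fin θ → Ω → ℝ := fun j ω => X j ω - x with hZp_def
  set Zm : Fin θ → Ω → ℝ := fun j ω => x - X j ω with hZm_def
  have hZp_meas : ∀ j, Measurable (Zp j) := fun j => (hmeas j).sub_const x
  have hZm_meas : ∀ j, Measurable (Zm j) := fun j => measurable_const.sub (hmeas j)
  have hZp_indep : iIndepFun Zp μ :=
    hindep.comp (fun _ => fun y => y - x) (fun _ => measurable_id.sub_const x)
  have hZm_indep : iIndepFun Zm μ :=
    hindep.comp (fun _ => fun y => x - y) (fun _ => measurable_const.sub measurable_id)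
  have hZp_mean : ∀ j, ∫ ω, Zp j ω ∂μ = 0 := by
    intro j
    rw [hZp_def]
    rw [integral_sub (hXint j) (integrable_const x), hmean j, integral_const]
    simp [measure_univ]
  have hZm_mean : ∀ j, ∫ ω, Zm j ω ∂μ = 0 := by
    intro j
    rw [hZm_def]
    rw [integral_sub (integrable_const x) (hXint j), hmean j, integral_const]
    simp [measure_univ]
  have hZp_bdd : ∀ j, ∀ᵐ ω ∂μ, |Zp j ω| ≤ b := by
    intro j
    filter_upwards [hbdd j] with ω hω
    have h1 := abs_le.1 hω
    have h2 := abs_le.1 hxχ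
    rw [hZp_def, hb_def]
    rw [abs_le]
    constructor <;> simp <;> linarith
  have hZm_bdd : ∀ j, ∀ᵐ ω ∂μ, |Zm j ω| ≤ b := by
    intro j
    filter_upwards [hbdd j] with ω hω
    have h1 := abs_le.1 hω
    have h2 := abs_le.1 hxχ
    rw [hZm_def, hb_def]
    rw [abs_le]
    constructor <;> simp <;> linarith
  have hZp_var : ∀ j, ∫ ω, (Zp j ω)^2 ∂μ ≤ V := fun j => hvar' j
  have hZm_var : ∀ j, ∫ ω, (Zm j ω)^2 ∂μ ≤ V := by
    intro j
    have : ∀ ω, (Zm j ω)^2 = (X j ω - x)^2 := by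
      intro ω; rw [hZm_def]; ring
    simp_rw [this]
    exact hvar' j
  -- tail bounds
  have h1 := aux_tail μ Zp b V t A hb hV ht.le htb hZp_meas hZp_indep hZp_mean hZp_bdd hZp_var
  have h2 := aux_tail μ Zm b V t A hb hV ht.le htb hZm_meas hZm_indep hZm_mean hZm_bdd hZm_var
  -- event inclusion
  have hsub : {ω | (ε / 2) * OPT ≤ |((n : ℝ) / θ) * (∑ j, X j ω) - n * x|}
      ⊆ {ω | A ≤ ∑ j, Zp j ω} ∪ {ω | A ≤ ∑ j, Zm j ω} := by
    intro ω hω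
    simp only [Set.mem_setOf_eq] at hω
    set S : ℝ := ∑ j, X j ω with hS_def
    have hkey : ((n : ℝ) / θ) * S - n * x = ((n : ℝ) / θ) * (S - θ * x) := by
      field_simp
    rw [hkey, abs_mul, abs_of_pos (div_pos hnR hθpos)] at hω
    have hA_le : A ≤ |S - θ * x| := by
      have hmul := mul_le_mul_of_nonneg_left hω (le_of_lt (div_pos hθpos hnR))
      have e1 : (θ:ℝ)/n * ((n:ℝ)/θ * |S - θ * x|) = |S - θ * x| := by
        field_simp
      have e2 : A = (θ:ℝ)/n * (ε / 2 * OPT) := by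
        rw [hA_def, ha_def]; field_simp
      rw [e1] at hmul
      linarith [hmul, e2.le, e2.ge]
    have hsump : ∑ j, Zp j ω = S - θ * x := by
      rw [hZp_def, hS_def]
      rw [Finset.sum_sub_distrib]
      simp [Finset.sum_const, Finset.card_univ, nsmul_eq_mul]
    have hsumm : ∑ j, Zm j ω = θ * x - S := by
      rw [hZm_def, hS_def]
      rw [Finset.sum_sub_distrib]
      simp [Finset.sum_const, Finset.card_univ, nsmul_eq_mul]
    rcases le_abs.mp hA_le with hc | hc
    · left; simp only [Set.mem_setOf_eq]; rw [hsump]; exact hc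
    · right; simp only [Set.mem_setOf_eq]; rw [hsumm]; linarith
  -- exponent computation
  have hexp_eq : -t * A + θ * (t^2 * V * (3 / (2 * (3 - t * b))))
      = -(θ * (a^2 / (2 * D))) := by
    rw [ht_def, hD_def, hA_def]
    exact aux_exponent a b V (θ:ℝ) ha hb hV
  have hLle : L ≤ (θ:ℝ) * (a^2 / (2 * D)) := by
    have hq : 0 < a^2 / (2 * D) := by positivity
    have hmul := mul_le_mul_of_nonneg_right hθ hq.le
    have heq : ((8 * n * χ / ε ^ 2) * (ε / 3 + 1) * L) / OPT * (a^2 / (2 * D)) = L := by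
      rw [ha_def, hD_def, hV_def, hb_def]
      have hd1 : χ * OPT / (n:ℝ) + ε * OPT / (2 * (n:ℝ)) * (2 * χ) / 3
          = χ * OPT / (n:ℝ) * (1 + ε/3) := by
        field_simp
      rw [hd1]
      have h2 : (0:ℝ) < 1 + ε/3 := by linarith
      field_simp
      ring
    rw [heq] at hmul
    exact hmul
  have hexp_le : Real.exp (-t * A + θ * (t^2 * V * (3 / (2 * (3 - t * b))))) ≤
      Real.exp (-L) := by
    rw [hexp_eq]
    exact Real.exp_le_exp.mpr (by linarith)
  have hexpL : Real.exp (-L) = 1 / (2 * ((n:ℝ) ^ ℓ * Nat.choose n k)) := by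
    rw [Real.exp_neg, hLdef, Real.exp_add, Real.exp_add,
      Real.exp_log two_pos, Real.exp_log hC0,
      show Real.exp (ℓ * Real.log n) = (n:ℝ) ^ ℓ by
        rw [Real.rpow_def_of_pos hnR, mul_comm]]
    rw [one_div]
    congr 1
    ring
  -- put it together
  calc (μ {ω | (ε / 2) * OPT ≤ |((n : ℝ) / θ) * (∑ j, X j ω) - n * x|}).toReal
      ≤ ((μ {ω | A ≤ ∑ j, Zp j ω}) + (μ {ω | A ≤ ∑ j, Zm j ω})).toReal := by
        refine ENNReal.toReal_mono ?_ (le_trans (measure_mono hsub) (measure_union_le _ _))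
        exact ENNReal.add_ne_top.2 ⟨measure_ne_top _ _, measure_ne_top _ _⟩
    _ = (μ {ω | A ≤ ∑ j, Zp j ω}).toReal + (μ {ω | A ≤ ∑ j, Zm j ω}).toReal :=
        ENNReal.toReal_add (measure_ne_top _ _) (measure_ne_top _ _)
    _ ≤ Real.exp (-t * A + θ * (t^2 * V * (3 / (2 * (3 - t * b)))))
        + Real.exp (-t * A + θ * (t^2 * V * (3 / (2 * (3 - t * b))))) := add_le_add h1 h2
    _ ≤ Real.exp (-L) + Real.exp (-L) := add_le_add hexp_le hexp_le
    _ = 2 * Real.exp (-L) := by ring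
    _ = 1 / ((n : ℝ) ^ ℓ * Nat.choose n k) := by
        rw [hexpL]
        have hpos : (0:ℝ) < (n:ℝ) ^ ℓ * Nat.choose n k := by positivity
        field_simp
end

section
/- Let n ≥ 2 and k ≤ n be positive integers, ε₂ > 0, ℓ > 0, χ > 0, and y > 0. Set β = n·((4/3)ε₂ + 2)·(ℓ ln n + ln log₂(2n) + ln C(n,k)) / ε₂², where C(n,k) is the binomial coefficient. Let x_1, …, x_θ be independent identically distributed real random variables with common mean x ≥ 0 satisfying |x_j| ≤ χ almost surely and Var[x_j] ≤ χ x, and suppose θ ≥ β / y. Then: (1) if n·x < y·χ, then Pr[ (n/θ) ∑_{j=1}^θ x_j ≥ (1 + ε₂)·y·χ ] ≤ n^{−ℓ} / (log₂(n) · C(n,k)); and (2) for any OPT with n·x ≤ OPT and OPT ≥ y·χ, Pr[ (n/θ) ∑_{j=1}^θ x_j > (1 + ε₂)·OPT ] ≤ n^{−ℓ} / (log₂(n) · C(n,k)). -/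
open MeasureTheory ProbabilityTheory BigOperators


section StatTestAux
open Real

lemma nonneg_of_hasDerivAt (f f' : ℝ → ℝ) (hd : ∀ u, HasDerivAt f (f' u) u)
    (h0 : f 0 = 0) (hf' : ∀ u, 0 ≤ u → 0 ≤ f' u) : ∀ u, 0 ≤ u → 0 ≤ f u := by
  intro u hu
  have hm : MonotoneOn f (Set.Ici 0) := by
    apply monotoneOn_of_deriv_nonneg (convex_Ici 0)
      (fun x _ => (hd x).continuousAt.continuousWithinAt)
      (fun x hx => (hd x).differentiableAt.differentiableWithinAt)
    intro x hx
    rw [(hd x).deriv]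
    exact hf' x (le_of_lt (by simpa using hx))
  calc (0:ℝ) = f 0 := h0.symm
    _ ≤ f u := hm (Set.self_mem_Ici) (Set.mem_Ici.2 hu) hu

lemma aux_A (u : ℝ) (hu : 0 ≤ u) : (1 - u/3) * (Real.exp u - 1 - u) ≤ u^2/2 := by
  have h2 : ∀ u : ℝ, 0 ≤ u → 0 ≤ 1/3 + ((u-1)/3) * Real.exp u := by
    apply nonneg_of_hasDerivAt _ (fun u => (u/3) * Real.exp u)
    · intro u
      have h := (hasDerivAt_const u (1/3:ℝ)).add
          ((((hasDerivAt_id u).sub_const 1).div_const 3).mul (Real.hasDerivAt_exp u))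
      refine h.congr_deriv ?_
      simp; ring
    · norm_num
    · intro u hu; positivity
  have h1 : ∀ u : ℝ, 0 ≤ u → 0 ≤ (u+2)/3 - ((2-u)/3) * Real.exp u := by
    apply nonneg_of_hasDerivAt _ (fun u => 1/3 + ((u-1)/3) * Real.exp u)
    · intro u
      have h := (((hasDerivAt_id u).add_const 2).div_const 3).sub
          (((((hasDerivAt_const u (2:ℝ)).sub (hasDerivAt_id u))).div_const 3).mul
            (Real.hasDerivAt_exp u))
      refine h.congr_deriv ?_
      simp; ring
    · norm_num
    · exact h2
  have h0 : ∀ u : ℝ, 0 ≤ u → 0 ≤ u^2/2 - (1 - u/3) * (Real.exp u - 1 - u) := by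
    apply nonneg_of_hasDerivAt _ (fun u => (u+2)/3 - ((2-u)/3) * Real.exp u)
    · intro u
      have h := (((hasDerivAt_pow 2 u).div_const 2)).sub
          ((((hasDerivAt_const u (1:ℝ)).sub ((hasDerivAt_id u).div_const 3))).mul
            (((Real.hasDerivAt_exp u).sub (hasDerivAt_const u 1)).sub (hasDerivAt_id u)))
      refine h.congr_deriv ?_
      simp; ring
    · norm_num
    · exact h1
  linarith [h0 u hu]

lemma aux_B (w : ℝ) (hw : w ≤ 0) : Real.exp w - 1 - w ≤ w^2/2 := by
  have hm : AntitoneOn (fun w : ℝ => w^2/2 - (Real.exp w - 1 - w)) (Set.Iic 0) := by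
    apply antitoneOn_of_deriv_nonpos (convex_Iic 0)
    · fun_prop
    · fun_prop
    · intro v hv
      have hd := ((hasDerivAt_pow 2 v).div_const 2).sub
          (((Real.hasDerivAt_exp v).sub (hasDerivAt_const v 1)).sub (hasDerivAt_id' (x := v)))
      rw [HasDerivAt.deriv (f := fun w : ℝ => w^2/2 - (Real.exp w - 1 - w)) hd]
      simp at hv ⊢
      nlinarith [Real.exp_pos v, Real.add_one_le_exp v]
  have := hm (Set.mem_Iic.2 hw) (Set.mem_Iic.2 le_rfl) hw
  norm_num [Real.exp_zero] at this
  linarith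

lemma aux_C {c w : ℝ} (hc0 : 0 < c) (hc3 : c < 3) (hw : w ≤ c) :
    Real.exp w ≤ 1 + w + w^2 / (2*(1-c/3)) := by
  have hK : (0:ℝ) < 2*(1-c/3) := by linarith
  rcases le_or_gt w 0 with h|h
  · have h1 := aux_B w h
    have h2 : w^2/2 ≤ w^2/(2*(1-c/3)) := by
      gcongr <;> linarith [sq_nonneg w]
    linarith
  · have hA := aux_A w h.le
    have h13 : 0 < 1 - w/3 := by linarith
    have h1 : Real.exp w - 1 - w ≤ w^2/(2*(1-w/3)) := by
      rw [le_div_iff₀ (by linarith)]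
      nlinarith
    have h2 : w^2/(2*(1-w/3)) ≤ w^2/(2*(1-c/3)) := by
      gcongr <;> linarith [sq_nonneg w]
    linarith

lemma mgf_bound {Ω : Type*} [MeasurableSpace Ω] (μ : Measure Ω) [IsProbabilityMeasure μ]
    {χ x t : ℝ} (hχ : 0 < χ) (hx : 0 ≤ x) (ht : 0 < t) (htχ : t*χ < 3)
    {Y : Ω → ℝ} (hm : Measurable Y) (hmean : ∫ ω, Y ω ∂μ = x)
    (hb : ∀ᵐ ω ∂μ, |Y ω| ≤ χ) (hv : variance Y μ ≤ χ*x) :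
    mgf Y μ t ≤ Real.exp (t*x + t^2*(χ*x)/(2*(1-t*χ/3))) := by
  have h13 : 0 < 1 - t*χ/3 := by linarith
  set K : ℝ := 1/(2*(1-t*χ/3)) with hKdef
  have hK : 0 < K := by positivity
  have hmem2 : MemLp Y 2 μ :=
    (memLp_top_of_bound hm.aestronglyMeasurable χ
      (by simpa [Real.norm_eq_abs] using hb)).mono_exponent le_top
  have hint : Integrable Y μ := hmem2.integrable one_le_two
  have hsq : Integrable (fun ω => (Y ω - x)^2) μ := by
    have := (hmem2.sub (memLp_const x)).integrable_sq
    simpa using this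
  have hvar_eq : variance Y μ = ∫ ω, (Y ω - x)^2 ∂μ := by
    rw [variance_eq_integral hm.aemeasurable]
    rw [hmean]
  have hV0 : 0 ≤ ∫ ω, (Y ω - x)^2 ∂μ := integral_nonneg fun ω => sq_nonneg _
  have hVle : ∫ ω, (Y ω - x)^2 ∂μ ≤ χ*x := hvar_eq ▸ hv
  -- pointwise bound
  have hpt : ∀ᵐ ω ∂μ, Real.exp (t * Y ω) ≤
      Real.exp (t*x) * (1 + t*(Y ω - x) + K * (t*(Y ω - x))^2) := by
    filter_upwards [hb] with ω hω
    have hwc : t*(Y ω - x) ≤ t*χ := by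
      have h1 : Y ω - x ≤ χ := by
        have := (abs_le.1 hω).2; linarith
      nlinarith
    have hC := aux_C (mul_pos ht hχ) htχ hwc
    have hEq : Real.exp (t * Y ω) = Real.exp (t*x) * Real.exp (t*(Y ω - x)) := by
      rw [← Real.exp_add]; ring_nf
    rw [hEq]
    have : Real.exp (t*(Y ω - x)) ≤ 1 + t*(Y ω - x) + K * (t*(Y ω - x))^2 := by
      have := hC
      rw [hKdef]
      calc Real.exp (t*(Y ω - x)) ≤ 1 + t*(Y ω - x) + (t*(Y ω - x))^2/(2*(1-t*χ/3)) := hC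
        _ = 1 + t*(Y ω - x) + 1/(2*(1-t*χ/3)) * (t*(Y ω - x))^2 := by ring
    exact mul_le_mul_of_nonneg_left this (Real.exp_nonneg _)
  -- integrability of both sides
  have hie : Integrable (fun ω => Real.exp (t * Y ω)) μ := by
    apply Integrable.mono' (integrable_const (Real.exp (t*χ)))
      ((hm.const_mul t).exp).aestronglyMeasurable
    filter_upwards [hb] with ω hω
    rw [Real.norm_eq_abs, abs_of_pos (Real.exp_pos _)]
    apply Real.exp_le_exp.2
    nlinarith [(abs_le.1 hω).2]
  have hig : Integrable (fun ω => Real.exp (t*x) * (1 + t*(Y ω - x) + K * (t*(Y ω - x))^2)) μ := by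
    have : Integrable (fun ω => 1 + t*(Y ω - x) + K * (t*(Y ω - x))^2) μ := by
      have h1 : Integrable (fun ω => t*(Y ω - x)) μ := (hint.sub (integrable_const x)).const_mul t
      have h2 : Integrable (fun ω => K * (t*(Y ω - x))^2) μ := by
        have : Integrable (fun ω => (K*t^2) * (Y ω - x)^2) μ := hsq.const_mul _
        convert this using 2 with ω
        ring
      exact ((integrable_const (1:ℝ)).add h1).add h2
    exact this.const_mul _
  -- integrate
  have hmgf : mgf Y μ t ≤ ∫ ω, Real.exp (t*x) * (1 + t*(Y ω - x) + K * (t*(Y ω - x))^2) ∂μ :=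
    integral_mono_ae hie hig hpt
  have hIcalc : ∫ ω, Real.exp (t*x) * (1 + t*(Y ω - x) + K * (t*(Y ω - x))^2) ∂μ
      = Real.exp (t*x) * (1 + K*t^2 * ∫ ω, (Y ω - x)^2 ∂μ) := by
    rw [integral_const_mul]
    congr 1
    have h1 : Integrable (fun ω => t*(Y ω - x)) μ := (hint.sub (integrable_const x)).const_mul t
    have h2 : Integrable (fun ω => K * (t*(Y ω - x))^2) μ := by
      have : Integrable (fun ω => (K*t^2) * (Y ω - x)^2) μ := hsq.const_mul _
      convert this using 2 with ω; ring
    have h12 : Integrable (fun ω => 1 + t*(Y ω - x)) μ := (integrable_const 1).add h1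
    rw [integral_add h12 h2, integral_add (integrable_const (1:ℝ)) h1]
    have e1 : ∫ _ω, (1:ℝ) ∂μ = 1 := by simp
    have e2 : ∫ ω, t*(Y ω - x) ∂μ = 0 := by
      rw [integral_const_mul, integral_sub hint (integrable_const x), hmean]
      simp
    have e3 : ∫ ω, K * (t*(Y ω - x))^2 ∂μ = K*t^2 * ∫ ω, (Y ω - x)^2 ∂μ := by
      rw [← integral_const_mul]
      congr 1 with ω
      ring
    rw [e1, e2, e3]
    ring
  have hfin : Real.exp (t*x) * (1 + K*t^2 * ∫ ω, (Y ω - x)^2 ∂μ)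
      ≤ Real.exp (t*x + t^2*(χ*x)/(2*(1-t*χ/3))) := by
    rw [Real.exp_add]
    apply mul_le_mul_of_nonneg_left _ (Real.exp_nonneg _)
    have hle : 1 + K*t^2 * ∫ ω, (Y ω - x)^2 ∂μ ≤ 1 + K*t^2*(χ*x) := by
      have := mul_le_mul_of_nonneg_left hVle (by positivity : (0:ℝ) ≤ K*t^2)
      linarith
    calc 1 + K*t^2 * ∫ ω, (Y ω - x)^2 ∂μ ≤ 1 + K*t^2*(χ*x) := hle
      _ ≤ Real.exp (K*t^2*(χ*x)) := by
          have := Real.add_one_le_exp (K*t^2*(χ*x)); linarith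
      _ = Real.exp (t^2*(χ*x)/(2*(1-t*χ/3))) := by
          congr 1; rw [hKdef]; ring
  calc mgf Y μ t ≤ _ := hmgf
    _ = _ := hIcalc
    _ ≤ _ := hfin

lemma tail_bound {Ω : Type*} [MeasurableSpace Ω] (μ : Measure Ω) [IsProbabilityMeasure μ]
    {θ : ℕ} (X : Fin θ → Ω → ℝ) {χ x t : ℝ} (τ : ℝ)
    (hχ : 0 < χ) (hx : 0 ≤ x) (ht : 0 < t) (htχ : t*χ < 3)
    (hmeas : ∀ j, Measurable (X j))
    (hindep : iIndepFun X μ)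
    (hmean : ∀ j, ∫ ω, X j ω ∂μ = x)
    (hbdd : ∀ j, ∀ᵐ ω ∂μ, |X j ω| ≤ χ)
    (hvar : ∀ j, variance (X j) μ ≤ χ * x) :
    (μ {ω | τ ≤ ∑ j, X j ω}).toReal ≤
      Real.exp ((θ:ℝ)*(t*x + t^2*(χ*x)/(2*(1-t*χ/3))) - t*τ) := by
  have hintj : ∀ j, Integrable (fun ω => Real.exp (t * X j ω)) μ := by
    intro j
    apply Integrable.mono' (integrable_const (Real.exp (t*χ)))
      (((hmeas j).const_mul t).exp).aestronglyMeasurable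
    filter_upwards [hbdd j] with ω hω
    rw [Real.norm_eq_abs, abs_of_pos (Real.exp_pos _)]
    exact Real.exp_le_exp.2 (by nlinarith [(abs_le.1 hω).2])
  have hintS : Integrable (fun ω => Real.exp (t * (∑ j, X j) ω)) μ :=
    hindep.integrable_exp_mul_sum hmeas (fun i _ => hintj i)
  have hchern := measure_ge_le_exp_mul_mgf (X := ∑ j, X j) (μ := μ) τ ht.le hintS
  have hset : {ω | τ ≤ ∑ j, X j ω} = {ω | τ ≤ (∑ j, X j) ω} := by
    ext ω; simp [Finset.sum_apply]
  rw [hset]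
  refine hchern.trans ?_
  rw [hindep.mgf_sum hmeas]
  have hprod : ∏ j : Fin θ, mgf (X j) μ t
      ≤ ∏ _j : Fin θ, Real.exp (t*x + t^2*(χ*x)/(2*(1-t*χ/3))) := by
    apply Finset.prod_le_prod (fun j _ => mgf_nonneg)
    intro j _
    exact mgf_bound μ hχ hx ht htχ (hmeas j) (hmean j) (hbdd j) (hvar j)
  calc Real.exp (-t*τ) * ∏ j, mgf (X j) μ t
      ≤ Real.exp (-t*τ) * ∏ _j : Fin θ, Real.exp (t*x + t^2*(χ*x)/(2*(1-t*χ/3))) :=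
        mul_le_mul_of_nonneg_left hprod (Real.exp_nonneg _)
    _ = Real.exp ((θ:ℝ)*(t*x + t^2*(χ*x)/(2*(1-t*χ/3))) - t*τ) := by
        rw [Finset.prod_const, ← Real.exp_nat_mul, ← Real.exp_add]
        congr 1
        simp only [Finset.card_univ, Fintype.card_fin]
        ring

set_option maxHeartbeats 2000000 in
lemma main_bound {Ω : Type*} [MeasurableSpace Ω] (μ : Measure Ω) [IsProbabilityMeasure μ]
    (n k : ℕ) (hn : 2 ≤ n) (hkn : k ≤ n)
    (ε₂ ℓ χ y : ℝ) (hε₂ : 0 < ε₂) (hℓ : 0 < ℓ) (hχ : 0 < χ) (hy : 0 < y)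
    (θ : ℕ) (X : Fin θ → Ω → ℝ) (x : ℝ) (hx : 0 ≤ x)
    (hmeas : ∀ j, Measurable (X j))
    (hindep : iIndepFun X μ)
    (hmean : ∀ j, ∫ ω, X j ω ∂μ = x)
    (hbdd : ∀ j, ∀ᵐ ω ∂μ, |X j ω| ≤ χ)
    (hvar : ∀ j, variance (X j) μ ≤ χ * x)
    (hθ : (n * ((4 / 3) * ε₂ + 2) *
        (ℓ * Real.log n + Real.log (Real.logb 2 (2 * n)) + Real.log (Nat.choose n k)))
        / ε₂ ^ 2 / y ≤ (θ : ℝ))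
    (m : ℝ) (hxm : x ≤ m) (hm : y*χ ≤ m*n) :
    (μ {ω | (1+ε₂)*m*(θ:ℝ) ≤ ∑ j, X j ω}).toReal ≤
      Real.exp (-(ℓ*Real.log n + Real.log (Real.logb 2 (2*n)) + Real.log (Nat.choose n k))) := by
  set L : ℝ := ℓ*Real.log n + Real.log (Real.logb 2 (2*n)) + Real.log (Nat.choose n k) with hLdef
  have hn1 : (1:ℝ) < n := by
    have : (2:ℝ) ≤ n := by exact_mod_cast hn
    linarith
  have hn0 : (0:ℝ) < n := by linarith
  have hlogn : 0 < Real.log n := Real.log_pos hn1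
  have hlogb1 : 1 ≤ Real.logb 2 (2*n) := by
    have h2n : Real.logb 2 (2*(n:ℝ)) = Real.logb 2 2 + Real.logb 2 n := by
      rw [Real.logb_mul (by norm_num) (by positivity)]
    rw [h2n, Real.logb_self_eq_one (by norm_num)]
    have : 0 ≤ Real.logb 2 (n:ℝ) := Real.logb_nonneg (by norm_num) (by linarith)
    linarith
  have hlogb : 0 ≤ Real.log (Real.logb 2 (2*n)) := Real.log_nonneg hlogb1
  have hC1 : (1:ℝ) ≤ (Nat.choose n k : ℝ) := by
    exact_mod_cast Nat.succ_le_of_lt (Nat.choose_pos hkn)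
  have hlogC : 0 ≤ Real.log (Nat.choose n k) := Real.log_nonneg hC1
  have hL : 0 < L := by
    have : 0 < ℓ * Real.log n := mul_pos hℓ hlogn
    rw [hLdef]; linarith
  have hm0 : 0 < m := by nlinarith [mul_pos hy hχ]
  have hθR : 0 < (θ:ℝ) := by
    have hB : 0 < (n:ℝ) * ((4/3)*ε₂ + 2) * L / ε₂^2 / y := by positivity
    linarith [hθ]
  have hθ' : (n:ℝ)*((4/3)*ε₂+2)*L ≤ (θ:ℝ)*ε₂^2*y := by
    rw [div_le_iff₀ hy, div_le_iff₀ (by positivity : (0:ℝ) < ε₂^2)] at hθ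
    nlinarith [hθ]
  have h4 : ((4/3)*ε₂+2)*L*χ ≤ (θ:ℝ)*ε₂^2*m := by
    have hny : 0 < (n:ℝ)*y := by positivity
    have h5 : ((n:ℝ)*((4/3)*ε₂+2)*L)*(y*χ) ≤ ((θ:ℝ)*ε₂^2*y)*(m*(n:ℝ)) := by
      apply mul_le_mul hθ' hm (by positivity)
      positivity
    refine le_of_mul_le_mul_left ?_ hny
    calc ((n:ℝ)*y) * (((4/3)*ε₂+2)*L*χ) = ((n:ℝ)*((4/3)*ε₂+2)*L)*(y*χ) := by ring
      _ ≤ ((θ:ℝ)*ε₂^2*y)*(m*(n:ℝ)) := h5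
      _ = ((n:ℝ)*y)*((θ:ℝ)*ε₂^2*m) := by ring
  have hc2 : (0:ℝ) < (4/3)*ε₂+2 := by linarith
  rcases eq_or_lt_of_le hx with hx0 | hx0
  · -- x = 0 case
    obtain rfl : x = (0:ℝ) := hx0.symm
    have ht : (0:ℝ) < 3/(2*χ) := by positivity
    have htχ : (3/(2*χ))*χ < 3 := by
      rw [div_mul_eq_mul_div, div_lt_iff₀ (by positivity : (0:ℝ) < 2*χ)]
      nlinarith
    refine (tail_bound μ X ((1+ε₂)*m*(θ:ℝ)) hχ le_rfl ht htχ hmeas hindep hmean hbdd hvar).trans ?_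
    apply Real.exp_le_exp.2
    have hE : (θ:ℝ)*((3/(2*χ))*0 + (3/(2*χ))^2*(χ*0)/(2*(1-(3/(2*χ))*χ/3))) - (3/(2*χ))*((1+ε₂)*m*(θ:ℝ))
        = -((3*((1+ε₂)*m*(θ:ℝ)))/(2*χ)) := by ring
    rw [hE, neg_le_neg_iff]
    rw [le_div_iff₀ (by positivity : (0:ℝ) < 2*χ)]
    have key : (2:ℝ)*ε₂^2 ≤ 3*(1+ε₂)*((4/3)*ε₂+2) := by nlinarith
    have key2 := mul_le_mul_of_nonneg_right key (mul_nonneg hm0.le hθR.le)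
    have goal2 : ((4/3)*ε₂+2)*(L*(2*χ)) ≤ ((4/3)*ε₂+2)*(3*((1+ε₂)*m*(θ:ℝ))) := by
      nlinarith [h4, key2]
    linarith [le_of_mul_le_mul_left goal2 hc2]
  · -- x > 0 case
    set a : ℝ := (1+ε₂)*m - x with hadef
    have ha : 0 < a := by nlinarith [mul_pos hε₂ hm0]
    set D : ℝ := χ*x + χ*a/3 with hDdef
    have hD : 0 < D := by positivity
    have ht : 0 < a/D := by positivity
    have htχ : (a/D)*χ < 3 := by
      rw [div_mul_eq_mul_div, div_lt_iff₀ hD]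
      rw [hDdef]; nlinarith [mul_pos hχ hx0]
    refine (tail_bound μ X ((1+ε₂)*m*(θ:ℝ)) hχ hx ht htχ hmeas hindep hmean hbdd hvar).trans ?_
    apply Real.exp_le_exp.2
    have h13 : 1 - (a/D)*χ/3 = χ*x/D := by
      rw [hDdef]; field_simp; ring
    have hE : (θ:ℝ)*((a/D)*x + (a/D)^2*(χ*x)/(2*(1-(a/D)*χ/3))) - (a/D)*((1+ε₂)*m*(θ:ℝ))
        = -((θ:ℝ)*a^2/(2*D)) := by
      rw [h13]
      field_simp
      ring
    rw [hE, neg_le_neg_iff, le_div_iff₀ (by positivity : (0:ℝ) < 2*D)]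
    have f1 : 2*D ≤ χ*m*(2+(2/3)*ε₂) := by
      rw [hDdef, hadef]
      nlinarith [mul_le_mul_of_nonneg_left hxm hχ.le]
    have f2 : ε₂^2*m^2 ≤ a^2 := by
      have h1 : ε₂*m ≤ a := by rw [hadef]; nlinarith
      have := pow_le_pow_left₀ (by positivity : (0:ℝ) ≤ ε₂*m) h1 2
      calc ε₂^2*m^2 = (ε₂*m)^2 := by ring
        _ ≤ a^2 := this
    refine le_of_mul_le_mul_left ?_ hc2
    calc ((4/3)*ε₂+2)*(L*(2*D)) ≤ ((4/3)*ε₂+2)*(L*(χ*m*(2+(2/3)*ε₂))) := by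
          apply mul_le_mul_of_nonneg_left (mul_le_mul_of_nonneg_left f1 hL.le) hc2.le
      _ = (((4/3)*ε₂+2)*L*χ)*(m*(2+(2/3)*ε₂)) := by ring
      _ ≤ ((θ:ℝ)*ε₂^2*m)*(m*(2+(2/3)*ε₂)) := by
          apply mul_le_mul_of_nonneg_right h4
          positivity
      _ ≤ ((θ:ℝ)*ε₂^2*m)*(m*((4/3)*ε₂+2)) := by
          apply mul_le_mul_of_nonneg_left _ (by positivity)
          apply mul_le_mul_of_nonneg_left _ hm0.le
          linarith
      _ = ((4/3)*ε₂+2)*((θ:ℝ)*(ε₂^2*m^2)) := by ring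
      _ ≤ ((4/3)*ε₂+2)*((θ:ℝ)*a^2) := by
          apply mul_le_mul_of_nonneg_left (mul_le_mul_of_nonneg_left f2 hθR.le) hc2.le

end StatTestAux

set_option maxHeartbeats 2000000 in
/-- Tail bounds behind the statistical test of the sampling algorithm: with
`β = n((4/3)ε₂ + 2)(ℓ ln n + ln log₂(2n) + ln C(n,k))/ε₂²` and `θ ≥ β/y` i.i.d.
samples, each bounded by `χ` with mean `x ≥ 0` and variance at most `χ·x`:
(1) if `n·x < y·χ` then `(n/θ)·∑ x_j ≥ (1+ε₂)·y·χ` with probability at most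
`n^{−ℓ}/(log₂(n)·C(n,k))`; and (2) for any `OPT ≥ y·χ` with `n·x ≤ OPT`,
`(n/θ)·∑ x_j > (1+ε₂)·OPT` with probability at most `n^{−ℓ}/(log₂(n)·C(n,k))`. -/
theorem stmt_19 {Ω : Type*} [MeasurableSpace Ω] (μ : Measure Ω)
    [IsProbabilityMeasure μ]
    (n k : ℕ) (hn : 2 ≤ n) (hk0 : 0 < k) (hkn : k ≤ n)
    (ε₂ ℓ χ y : ℝ) (hε₂ : 0 < ε₂) (hℓ : 0 < ℓ) (hχ : 0 < χ) (hy : 0 < y)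
    (θ : ℕ) (X : Fin θ → Ω → ℝ) (x : ℝ) (hx : 0 ≤ x)
    (hmeas : ∀ j, Measurable (X j))
    (hindep : iIndepFun X μ)
    (hident : ∀ i j, IdentDistrib (X i) (X j) μ μ)
    (hmean : ∀ j, ∫ ω, X j ω ∂μ = x)
    (hbdd : ∀ j, ∀ᵐ ω ∂μ, |X j ω| ≤ χ)
    (hvar : ∀ j, variance (X j) μ ≤ χ * x)
    (hθ : (n * ((4 / 3) * ε₂ + 2) *
        (ℓ * Real.log n + Real.log (Real.logb 2 (2 * n)) + Real.log (Nat.choose n k)))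
        / ε₂ ^ 2 / y ≤ (θ : ℝ)) :
    ((n : ℝ) * x < y * χ →
      (μ {ω | (1 + ε₂) * y * χ ≤ ((n : ℝ) / θ) * ∑ j, X j ω}).toReal ≤
        (n : ℝ) ^ (-ℓ) / (Real.logb 2 n * Nat.choose n k)) ∧
    (∀ OPT : ℝ, (n : ℝ) * x ≤ OPT → y * χ ≤ OPT →
      (μ {ω | (1 + ε₂) * OPT < ((n : ℝ) / θ) * ∑ j, X j ω}).toReal ≤
        (n : ℝ) ^ (-ℓ) / (Real.logb 2 n * Nat.choose n k)) := by
  have hn1 : (1:ℝ) < n := by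
    have : (2:ℝ) ≤ n := by exact_mod_cast hn
    linarith
  have hnR : (0:ℝ) < n := by linarith
  have hlogn : 0 < Real.log n := Real.log_pos hn1
  have hlogbn : 0 < Real.logb 2 n := Real.logb_pos (by norm_num) hn1
  have h2n : Real.logb 2 (2*(n:ℝ)) = 1 + Real.logb 2 n := by
    rw [Real.logb_mul (by norm_num) (by positivity), Real.logb_self_eq_one (by norm_num)]
  have hlogb1 : 1 ≤ Real.logb 2 (2*n) := by rw [h2n]; linarith
  have hlogb0 : 0 < Real.logb 2 (2*(n:ℝ)) := by linarith
  have hC1 : (1:ℝ) ≤ (Nat.choose n k : ℝ) := by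
    exact_mod_cast Nat.succ_le_of_lt (Nat.choose_pos hkn)
  have hC0 : (0:ℝ) < (Nat.choose n k : ℝ) := by linarith
  have hlogC : 0 ≤ Real.log (Nat.choose n k) := Real.log_nonneg hC1
  set L : ℝ := ℓ*Real.log n + Real.log (Real.logb 2 (2*n)) + Real.log (Nat.choose n k) with hLdef
  have hL : 0 < L := by
    have h1 : 0 < ℓ * Real.log n := mul_pos hℓ hlogn
    have h2 : 0 ≤ Real.log (Real.logb 2 (2*n)) := Real.log_nonneg hlogb1
    rw [hLdef]; linarith
  have hθR : 0 < (θ:ℝ) := by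
    have hB : 0 < (n:ℝ) * ((4/3)*ε₂ + 2) * L / ε₂^2 / y := by positivity
    linarith [hθ]
  -- exp(-L) ≤ RHS
  have hexp_le : Real.exp (-L) ≤ (n : ℝ) ^ (-ℓ) / (Real.logb 2 n * Nat.choose n k) := by
    have hrpow : (n:ℝ)^(-ℓ) = Real.exp (-(ℓ*Real.log n)) := by
      rw [Real.rpow_def_of_pos hnR]
      congr 1; ring
    have hsplit : Real.exp (-L) = Real.exp (-(ℓ*Real.log n)) *
        Real.exp (-(Real.log (Real.logb 2 (2*n)))) * Real.exp (-(Real.log (Nat.choose n k))) := by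
      rw [← Real.exp_add, ← Real.exp_add]; congr 1; rw [hLdef]; ring
    rw [hsplit, Real.exp_neg (Real.log (Real.logb 2 (2*n))), Real.exp_neg (Real.log (Nat.choose n k)),
        Real.exp_log hlogb0, Real.exp_log hC0, ← hrpow]
    rw [div_eq_mul_inv, mul_inv]
    have h1 : (Real.logb 2 (2*(n:ℝ)))⁻¹ ≤ (Real.logb 2 (n:ℝ))⁻¹ := by
      apply inv_anti₀ hlogbn
      rw [h2n]; linarith
    have h2 : (0:ℝ) < (n:ℝ)^(-ℓ) := Real.rpow_pos_of_pos hnR _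
    calc (n:ℝ)^(-ℓ) * (Real.logb 2 (2*(n:ℝ)))⁻¹ * ((Nat.choose n k:ℝ))⁻¹
        ≤ (n:ℝ)^(-ℓ) * (Real.logb 2 (n:ℝ))⁻¹ * ((Nat.choose n k:ℝ))⁻¹ := by
          apply mul_le_mul_of_nonneg_right (mul_le_mul_of_nonneg_left h1 h2.le)
          positivity
      _ = (n:ℝ)^(-ℓ) * ((Real.logb 2 (n:ℝ))⁻¹ * ((Nat.choose n k:ℝ))⁻¹) := by ring
  constructor
  · intro hlt
    have hiff : ∀ S : ℝ, ((1+ε₂)*y*χ ≤ ((n:ℝ)/θ)*S) ↔ ((1+ε₂)*(y*χ/(n:ℝ))*(θ:ℝ) ≤ S) := by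
      intro S
      rw [div_mul_eq_mul_div, le_div_iff₀ hθR,
          show (1+ε₂)*(y*χ/(n:ℝ))*(θ:ℝ) = ((1+ε₂)*y*χ*(θ:ℝ))/(n:ℝ) by ring,
          div_le_iff₀ hnR]
      constructor <;> intro h <;> nlinarith [h]
    have hset : {ω | (1 + ε₂) * y * χ ≤ ((n : ℝ) / θ) * ∑ j, X j ω}
        = {ω | (1+ε₂)*(y*χ/(n:ℝ))*(θ:ℝ) ≤ ∑ j, X j ω} := by
      ext ω; exact hiff _
    rw [hset]
    refine (main_bound μ n k hn hkn ε₂ ℓ χ y hε₂ hℓ hχ hy θ X x hx hmeas hindep hmean hbdd hvar hθ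
      (y*χ/(n:ℝ)) ?_ ?_).trans hexp_le
    · rw [le_div_iff₀ hnR]; nlinarith [hlt]
    · rw [div_mul_cancel₀ _ (ne_of_gt hnR)]
  · intro OPT h1 h2
    have hOPT : 0 < OPT := lt_of_lt_of_le (mul_pos hy hχ) h2
    have hsub : {ω | (1 + ε₂) * OPT < ((n : ℝ) / θ) * ∑ j, X j ω}
        ⊆ {ω | (1+ε₂)*(OPT/(n:ℝ))*(θ:ℝ) ≤ ∑ j, X j ω} := by
      intro ω hω
      simp only [Set.mem_setOf_eq] at hω ⊢
      rw [div_mul_eq_mul_div, lt_div_iff₀ hθR] at hω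
      rw [show (1+ε₂)*(OPT/(n:ℝ))*(θ:ℝ) = ((1+ε₂)*OPT*(θ:ℝ))/(n:ℝ) by ring,
          div_le_iff₀ hnR]
      nlinarith [hω]
    have hmono : (μ {ω | (1 + ε₂) * OPT < ((n : ℝ) / θ) * ∑ j, X j ω}).toReal
        ≤ (μ {ω | (1+ε₂)*(OPT/(n:ℝ))*(θ:ℝ) ≤ ∑ j, X j ω}).toReal :=
      ENNReal.toReal_mono (measure_ne_top μ _) (measure_mono hsub)
    refine hmono.trans ((main_bound μ n k hn hkn ε₂ ℓ χ y hε₂ hℓ hχ hy θ X x hx hmeas hindep hmean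
      hbdd hvar hθ (OPT/(n:ℝ)) ?_ ?_).trans hexp_le)
    · rw [le_div_iff₀ hnR]; nlinarith [h1]
    · rw [div_mul_cancel₀ _ (ne_of_gt hnR)]; exact h2
end
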